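/- Let π : A → B be a groupoid covering between groupoids with finite automorphism groups, let y be an object of B and x an object of A with π(x) = y. Then |Aut(y)| / |Aut(x)| equals the cardinality of the set [x]_y of objects of A over y isomorphic to x. -/
import Mathlib

open CategoryTheory

/-- A groupoid covering: a functor with unique lifting of morphisms. -/
def IsGroupoidCovering {A B : Type*} [Groupoid A] [Groupoid B] (π : A ⥤ B) : Prop :=
  ∀ (x₁ : A) (y₂ : B) (φ : π.obj x₁ ⟶ y₂),
    ∃! p : (x₂ : A) × (x₁ ⟶ x₂), ∃ h : π.obj p.1 = y₂, π.map p.2 ≫ eqToHom h = φ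

/-- `|Aut y| / |Aut x|` equals the number of objects of `A` lying over `y`
which are isomorphic to `x`. -/
theorem card_aut_div_card_aut_eq_card_fiber_isoClass {A B : Type*}
    [Groupoid A] [Groupoid B]
    [∀ a : A, Finite (a ⟶ a)] [∀ b : B, Finite (b ⟶ b)]
    (π : A ⥤ B) (hπ : IsGroupoidCovering π) (y : B) (x : A) (hx : π.obj x = y) :
    Nat.card (y ⟶ y) / Nat.card (x ⟶ x) =
      Nat.card {x' : A // π.obj x' = y ∧ Nonempty (x' ≅ x)} := by
  set S := {x' : A // π.obj x' = y ∧ Nonempty (x' ≅ x)} with hS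
  -- the type of lifts at x
  set T := {p : (x₂ : A) × (x ⟶ x₂) // π.obj p.1 = y} with hT
  have e1 : (y ⟶ y) ≃ T := by
    refine
      { toFun := fun φ => ⟨(hπ x y (eqToHom hx ≫ φ)).choose,
          (hπ x y (eqToHom hx ≫ φ)).choose_spec.1.choose⟩
        invFun := fun q => eqToHom hx.symm ≫ π.map q.1.2 ≫ eqToHom q.2
        left_inv := ?_
        right_inv := ?_ }
    · intro φ
      obtain ⟨h, hφ⟩ := (hπ x y (eqToHom hx ≫ φ)).choose_spec.1
      simp only
      rw [hφ]
      simp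
    · intro q
      have hq : ∃ h : π.obj q.1.1 = y,
          π.map q.1.2 ≫ eqToHom h = eqToHom hx ≫ (eqToHom hx.symm ≫ π.map q.1.2 ≫ eqToHom q.2) := by
        refine ⟨q.2, ?_⟩
        simp
      have := (hπ x y (eqToHom hx ≫ (eqToHom hx.symm ≫ π.map q.1.2 ≫ eqToHom q.2))).choose_spec.2
        q.1 hq
      exact Subtype.ext this.symm
  have e2 : T ≃ Σ x' : S, (x ⟶ x'.1) :=
    { toFun := fun q => ⟨⟨q.1.1, q.2, ⟨(Groupoid.isoEquivHom _ _).symm q.1.2 |>.symm⟩⟩, q.1.2⟩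
      invFun := fun p => ⟨⟨p.1.1, p.2⟩, p.1.2.1⟩
      left_inv := fun q => rfl
      right_inv := fun p => rfl }
  have e3 : (Σ x' : S, (x ⟶ x'.1)) ≃ S × (x ⟶ x) :=
    (Equiv.sigmaCongrRight fun x' =>
      (Iso.refl x).homCongr (Classical.choice x'.2.2)).trans (Equiv.sigmaEquivProd S (x ⟶ x))
  have hcard : Nat.card (y ⟶ y) = Nat.card S * Nat.card (x ⟶ x) := by
    rw [Nat.card_congr (e1.trans (e2.trans e3)), Nat.card_prod]
  have : Nonempty (x ⟶ x) := ⟨𝟙 x⟩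
  rw [hcard, Nat.mul_div_cancel _ Nat.card_pos]
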